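/- A Mockingbird term t is a minimal element of the poset of terms ordered by ≼ (equivalently, the only term t' with t' ⇒ t is t itself) if and only if every subterm of t of the form (s ⋆ s), i.e., an application whose two arguments are equal, satisfies s = M. -/
import Mathlib


/-- Mockingbird terms: the constant `M`, variables `x i`, and applications. -/
inductive MTerm : Type
  | M : MTerm
  | var : ℕ → MTerm
  | app : MTerm → MTerm → MTerm
  deriving DecidableEq

/-- The one-step rewrite relation `⇒` on Mockingbird terms. -/
inductive Step : MTerm → MTerm → Prop
  | mock (t : MTerm) : Step (MTerm.app MTerm.M t) (MTerm.app t t)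
  | left {t1 t1' : MTerm} (t2 : MTerm) :
      Step t1 t1' → Step (MTerm.app t1 t2) (MTerm.app t1' t2)
  | right (t1 : MTerm) {t2 t2' : MTerm} :
      Step t2 t2' → Step (MTerm.app t1 t2) (MTerm.app t1 t2')

/-- `≼`, the reflexive-transitive closure of `⇒`. -/
def MLe : MTerm → MTerm → Prop := Relation.ReflTransGen Step

/-- `≡`, the reflexive-symmetric-transitive closure of `⇒`. -/
def MEquiv : MTerm → MTerm → Prop := Relation.EqvGen Step

/-- Strict version of `≼`. -/
def MLt (s t : MTerm) : Prop := MLe s t ∧ s ≠ t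

/-- Covering relation for `≼`. -/
def MCovBy (s t : MTerm) : Prop := MLt s t ∧ ∀ z, MLt s z → ¬ MLt z t

/-- Duplicative trees: white or black nodes with a list (forest) of children. -/
inductive DTree : Type
  | W : List DTree → DTree
  | B : List DTree → DTree

/-- The one-step relation `⋖` on duplicative forests. -/
inductive DStep : List DTree → List DTree → Prop
  | dup (g : List DTree) : DStep [DTree.W g] [DTree.B (g ++ g)]
  | white {g g' : List DTree} : DStep g g' → DStep [DTree.W g] [DTree.W g']
  | black {g g' : List DTree} : DStep g g' → DStep [DTree.B g] [DTree.B g']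
  | head {t t' : DTree} (f : List DTree) : DStep [t] [t'] → DStep (t :: f) (t' :: f)
  | tail (t : DTree) {f f' : List DTree} : DStep f f' → DStep (t :: f) (t :: f')

/-- `≪`, the reflexive-transitive closure of `⋖`. -/
def DLe : List DTree → List DTree → Prop := Relation.ReflTransGen DStep

/-- The map `fr` from Mockingbird terms to duplicative forests. -/
def fr : MTerm → List DTree
  | MTerm.M => []
  | MTerm.var _ => []
  | MTerm.app MTerm.M MTerm.M => [DTree.B []]
  | MTerm.app MTerm.M t' => [DTree.W (fr t')]
  | MTerm.app t t' => [DTree.B (fr t ++ fr t')]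

mutual
  /-- The pruning map on duplicative trees (returns a forest). -/
  def prT : DTree → List DTree
    | DTree.W g => [DTree.W (prF g)]
    | DTree.B g => prF g
  /-- The pruning map on duplicative forests. -/
  def prF : List DTree → List DTree
    | [] => []
    | t :: f => prT t ++ prF f
end

mutual
  /-- The statistic `mtStat` on duplicative trees. -/
  def mtStat : DTree → ℕ
    | DTree.W g => 2 * ml g
    | DTree.B g => ml g
  /-- Sum of `mtStat` over the trees of a forest. -/
  def mtsum : List DTree → ℕ
    | [] => 0
    | t :: f => mtStat t + mtsum f
  /-- The statistic `ml` on duplicative forests: `1 - ℓ + Σ mtStat`. -/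
  def ml : List DTree → ℕ
    | f => mtsum f + 1 - f.length
end

mutual
  /-- Number of white nodes in a duplicative tree. -/
  def whitesT : DTree → ℕ
    | DTree.W g => 1 + whitesF g
    | DTree.B g => whitesF g
  /-- Number of white nodes in a duplicative forest. -/
  def whitesF : List DTree → ℕ
    | [] => 0
    | t :: f => whitesT t + whitesF f
end

/-- Closed terms: no variables. -/
def MClosed : MTerm → Prop
  | MTerm.M => True
  | MTerm.var _ => False
  | MTerm.app a b => MClosed a ∧ MClosed b

/-- Degree: number of applications. -/
def deg : MTerm → ℕ
  | MTerm.M => 0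
  | MTerm.var _ => 0
  | MTerm.app a b => deg a + deg b + 1

/-- Subterm relation. -/
inductive Subterm : MTerm → MTerm → Prop
  | refl (t : MTerm) : Subterm t t
  | left {s a : MTerm} (b : MTerm) : Subterm s a → Subterm s (MTerm.app a b)
  | right (a : MTerm) {s b : MTerm} : Subterm s b → Subterm s (MTerm.app a b)

/-- The term `r_d`. -/
def rTerm : ℕ → MTerm
  | 0 => MTerm.M
  | d + 1 => MTerm.app MTerm.M (rTerm d)

/-- Saturated chain from `a` to `b`, given as the list of its elements. -/
def SatChain (a b : MTerm) (c : List MTerm) : Prop :=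
  List.Chain' MCovBy c ∧ c.head? = some a ∧ c.getLast? = some b

lemma step_eq_of_cond : ∀ {t' t : MTerm}, Step t' t →
    (∀ s, Subterm (MTerm.app s s) t → s = MTerm.M) → t' = t := by
  intro t' t h
  induction h with
  | mock t0 =>
    intro hc
    have := hc t0 (Subterm.refl _)
    rw [this]
  | left t2 h ih =>
    intro hc
    have h1 : _ = _ := ih (fun s hs => hc s (Subterm.left _ hs))
    rw [h1]
  | right t1 h ih =>
    intro hc
    have h1 : _ = _ := ih (fun s hs => hc s (Subterm.right _ hs))
    rw [h1]

lemma exists_pred_of_bad' : ∀ {u t : MTerm}, Subterm u t →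
    ∀ s, u = MTerm.app s s → s ≠ MTerm.M → ∃ t', Step t' t ∧ t' ≠ t := by
  intro u t hsub
  induction hsub with
  | refl _ =>
    intro s hu hne
    subst hu
    exact ⟨MTerm.app MTerm.M s, Step.mock s, by
      intro h; injection h with h1 h2; exact hne h1.symm⟩
  | left b h ih =>
    intro s hu hne
    obtain ⟨a', ha, hne'⟩ := ih s hu hne
    exact ⟨MTerm.app a' b, Step.left _ ha, by
      intro h; injection h with h1 h2; exact hne' h1⟩
  | right a h ih =>
    intro s hu hne
    obtain ⟨b', hb, hne'⟩ := ih s hu hne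
    exact ⟨MTerm.app a b', Step.right _ hb, by
      intro h; injection h with h1 h2; exact hne' h2⟩

/-- a term `t` is minimal for `≼` iff every subterm of the form `s ⋆ s`
satisfies `s = M`. -/
theorem mockingbird_minimal_iff (t : MTerm) :
    (∀ t', MLe t' t → t' = t) ↔
      (∀ s, Subterm (MTerm.app s s) t → s = MTerm.M) := by
  constructor
  · intro hmin s hsub
    by_contra hs
    obtain ⟨t', ht, hne⟩ := exists_pred_of_bad' hsub s rfl hs
    exact hne (hmin t' (Relation.ReflTransGen.single ht))
  · intro hc t' hle
    induction hle using Relation.ReflTransGen.head_induction_on with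
    | refl => rfl
    | head hstep _ ih =>
      subst ih
      exact step_eq_of_cond hstep hc
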